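/- For any no-signaling strategy Q in the r-party hypergraph game on G = (A_1,...,A_r, E), the function g : E → [0,1] defined by g(e) := Q(e,...,e | a_1,...,a_r) for e = (a_1,...,a_r) is a fractional matching: for every i and every a ∈ A_i, the sum ∑_{e ∈ E, e_i = a} g(e) ≤ 1. -/

import Mathlib

open scoped Classical

/-- For any no-signaling strategy Q in the r-party hypergraph game, the map
g(e) := Q(e,…,e | e) is a fractional matching: each value lies in [0,1] and the
total weight at every vertex is at most 1. -/
theorem ns_strategy_gives_fractional_matching
    (r : ℕ) (A : Fin r → Type) [∀ i, Fintype (A i)]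
    (E : Finset (∀ i, A i))
    (Q : (Fin r → (∀ j, A j)) → (∀ i, A i) → ℝ)
    (hQ0 : ∀ o a, 0 ≤ Q o a)
    (hQ1 : ∀ a, ∑ o : Fin r → (∀ j, A j), Q o a = 1)
    (hQE : ∀ o a, (∃ i, o i ∉ E) → Q o a = 0)
    (hQns : ∀ (i : Fin r) (a a' : ∀ j, A j), a i = a' i →
        ∀ ei : ∀ j, A j,
          (∑ o : Fin r → (∀ j, A j), if o i = ei then Q o a else 0) =
          (∑ o : Fin r → (∀ j, A j), if o i = ei then Q o a' else 0)) :
    (∀ e ∈ E, 0 ≤ Q (fun _ => e) e ∧ Q (fun _ => e) e ≤ 1) ∧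
    (∀ i, ∀ v : A i,
      ∑ e ∈ E.filter (fun e => e i = v), Q (fun _ => e) e ≤ 1) := by
  constructor
  · intro e he
    refine ⟨hQ0 _ _, ?_⟩
    calc Q (fun _ => e) e ≤ ∑ o : Fin r → (∀ j, A j), Q o e :=
          Finset.single_le_sum (fun o _ => hQ0 o e) (Finset.mem_univ _)
      _ = 1 := hQ1 e
  · intro i v
    rcases (E.filter (fun e => e i = v)).eq_empty_or_nonempty with h | ⟨e₀, he₀⟩
    · rw [h]; simp
    · have he₀v : e₀ i = v := (Finset.mem_filter.mp he₀).2
      calc ∑ e ∈ E.filter (fun e => e i = v), Q (fun _ => e) e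
          ≤ ∑ e ∈ E.filter (fun e => e i = v),
              ∑ o : Fin r → (∀ j, A j), (if o i = e then Q o e else 0) := by
            refine Finset.sum_le_sum fun e he => ?_
            have h := Finset.single_le_sum
              (f := fun o : Fin r → (∀ j, A j) => if o i = e then Q o e else 0)
              (fun o _ => by split_ifs; exacts [hQ0 o e, le_rfl])
              (Finset.mem_univ (fun _ => e))
            simpa using h
        _ = ∑ e ∈ E.filter (fun e => e i = v),
              ∑ o : Fin r → (∀ j, A j), (if o i = e then Q o e₀ else 0) := by
            refine Finset.sum_congr rfl fun e he => ?_
            exact hQns i e e₀ (by rw [(Finset.mem_filter.mp he).2, he₀v]) e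
        _ = ∑ o : Fin r → (∀ j, A j),
              ∑ e ∈ E.filter (fun e => e i = v), (if o i = e then Q o e₀ else 0) :=
            Finset.sum_comm
        _ ≤ ∑ o : Fin r → (∀ j, A j), Q o e₀ := by
            refine Finset.sum_le_sum fun o _ => ?_
            have : ∑ e ∈ E.filter (fun e => e i = v), (if o i = e then Q o e₀ else 0)
                = ∑ e ∈ E.filter (fun e => e i = v), (if e = o i then Q o e₀ else 0) := by
              exact Finset.sum_congr rfl fun e _ => if_congr eq_comm rfl rfl
            rw [this, Finset.sum_ite_eq']
            split_ifs
            · exact le_rfl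
            · exact hQ0 o e₀
        _ = 1 := hQ1 e₀
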